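/- Let λ > 1, r > 0, and set μ = (λ³−1)/(4λ). Suppose u is C² on the open disk D_r = {z ∈ ℂ : |z| < r}, continuous on its closure, satisfies Δu = 4e^u − 4e^{−2u} in D_r, and satisfies 0 ≤ u(z) ≤ log(μ r² + λ) on the closed disk. Then u(0) ≤ log λ. -/

import Mathlib

open Filter Topology


/-- The Euclidean Laplacian Δ = ∂²/∂x² + ∂²/∂y² of a function on ℂ ≅ ℝ². -/
noncomputable def laplacian (f : ℂ → ℝ) (z : ℂ) : ℝ :=
  fderiv ℝ (fun w => fderiv ℝ f w 1) z 1 +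
  fderiv ℝ (fun w => fderiv ℝ f w Complex.I) z Complex.I

section UU
variable (a b : ℝ)

noncomputable def gU (z : ℂ) : ℝ := a + b * (z.re ^ 2 + z.im ^ 2)
noncomputable def DgU (z : ℂ) : ℂ →L[ℝ] ℝ :=
  (2 * b * z.re) • (Complex.reCLM : ℂ →L[ℝ] ℝ) + (2 * b * z.im) • Complex.imCLM
noncomputable def UU (z : ℂ) : ℝ := Real.log (gU a b z)

variable {a b}

lemma gU_pos (ha : 0 < a) (hb : 0 ≤ b) (z : ℂ) : 0 < gU a b z := by
  have : 0 ≤ b * (z.re ^ 2 + z.im ^ 2) := by positivity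
  simp only [gU]; linarith

lemma hasFDerivAt_gU (z : ℂ) : HasFDerivAt (gU a b) (DgU b z) z := by
  have hre : HasFDerivAt (fun z : ℂ => z.re) Complex.reCLM z := Complex.reCLM.hasFDerivAt
  have him : HasFDerivAt (fun z : ℂ => z.im) Complex.imCLM z := Complex.imCLM.hasFDerivAt
  have h := (((hre.mul hre).add (him.mul him)).const_mul b).const_add a
  have heq : (fun z : ℂ => a + b * (z.re * z.re + z.im * z.im)) = gU a b := by
    funext w; simp only [gU]; ring
  simp only [Pi.mul_apply, Pi.add_apply] at h
  rw [heq] at h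
  refine h.congr_fderiv ?_
  ext w
  simp [DgU]
  try ring
  try tauto

lemma hasFDerivAt_UU (ha : 0 < a) (hb : 0 ≤ b) (z : ℂ) :
    HasFDerivAt (UU a b) ((gU a b z)⁻¹ • DgU b z) z :=
  (Real.hasDerivAt_log (gU_pos ha hb z).ne').comp_hasFDerivAt z (hasFDerivAt_gU z)

lemma fderiv_UU_one (ha : 0 < a) (hb : 0 ≤ b) (w : ℂ) :
    fderiv ℝ (UU a b) w 1 = 2 * b * w.re / gU a b w := by
  rw [(hasFDerivAt_UU ha hb w).fderiv]
  simp [DgU, div_eq_inv_mul]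

lemma fderiv_UU_I (ha : 0 < a) (hb : 0 ≤ b) (w : ℂ) :
    fderiv ℝ (UU a b) w Complex.I = 2 * b * w.im / gU a b w := by
  rw [(hasFDerivAt_UU ha hb w).fderiv]
  simp [DgU, div_eq_inv_mul]

lemma hasFDerivAt_P (ha : 0 < a) (hb : 0 ≤ b) (z : ℂ) :
    HasFDerivAt (fun w => 2 * b * w.re / gU a b w)
      ((gU a b z ^ 2)⁻¹ • (gU a b z • ((2*b) • (Complex.reCLM : ℂ →L[ℝ] ℝ))
        - (2 * b * z.re) • DgU b z)) z := by
  have hre : HasFDerivAt (fun z : ℂ => 2 * b * z.re) ((2*b) • (Complex.reCLM : ℂ →L[ℝ] ℝ)) z := by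
    simpa using Complex.reCLM.hasFDerivAt.const_mul (2*b)
  have hinv : HasFDerivAt (fun w => (gU a b w)⁻¹) ((-((gU a b z) ^ 2)⁻¹) • DgU b z) z :=
    (hasDerivAt_inv (gU_pos ha hb z).ne').comp_hasFDerivAt z (hasFDerivAt_gU z)
  have h := hre.mul hinv
  have heq : (fun w : ℂ => 2 * b * w.re * (gU a b w)⁻¹) = fun w => 2 * b * w.re / gU a b w := by
    funext w; rw [div_eq_mul_inv]
  simp only [Pi.mul_def] at h
  rw [heq] at h
  refine h.congr_fderiv ?_
  ext w
  have g0 := (gU_pos ha hb z).ne'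
  simp [DgU]
  field_simp
  ring

lemma hasFDerivAt_Q (ha : 0 < a) (hb : 0 ≤ b) (z : ℂ) :
    HasFDerivAt (fun w => 2 * b * w.im / gU a b w)
      ((gU a b z ^ 2)⁻¹ • (gU a b z • ((2*b) • (Complex.imCLM : ℂ →L[ℝ] ℝ))
        - (2 * b * z.im) • DgU b z)) z := by
  have him : HasFDerivAt (fun z : ℂ => 2 * b * z.im) ((2*b) • (Complex.imCLM : ℂ →L[ℝ] ℝ)) z := by
    simpa using Complex.imCLM.hasFDerivAt.const_mul (2*b)
  have hinv : HasFDerivAt (fun w => (gU a b w)⁻¹) ((-((gU a b z) ^ 2)⁻¹) • DgU b z) z :=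
    (hasDerivAt_inv (gU_pos ha hb z).ne').comp_hasFDerivAt z (hasFDerivAt_gU z)
  have h := him.mul hinv
  have heq : (fun w : ℂ => 2 * b * w.im * (gU a b w)⁻¹) = fun w => 2 * b * w.im / gU a b w := by
    funext w; rw [div_eq_mul_inv]
  simp only [Pi.mul_def] at h
  rw [heq] at h
  refine h.congr_fderiv ?_
  ext w
  have g0 := (gU_pos ha hb z).ne'
  simp [DgU]
  field_simp
  ring

lemma laplacian_UU (ha : 0 < a) (hb : 0 ≤ b) (z : ℂ) :
    laplacian (UU a b) z = 4 * a * b / gU a b z ^ 2 := by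
  have h1 : (fun w => fderiv ℝ (UU a b) w 1) = fun w => 2 * b * w.re / gU a b w :=
    funext fun w => fderiv_UU_one ha hb w
  have h2 : (fun w => fderiv ℝ (UU a b) w Complex.I) = fun w => 2 * b * w.im / gU a b w :=
    funext fun w => fderiv_UU_I ha hb w
  have g0 := (gU_pos ha hb z).ne'
  rw [laplacian, h1, h2, (hasFDerivAt_P ha hb z).fderiv, (hasFDerivAt_Q ha hb z).fderiv]
  simp [DgU, gU]
  field_simp
  ring
end UU


/-- 1-D second derivative test at a local max. -/
lemma second_deriv_nonpos {φ : ℝ → ℝ} {c : ℝ}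
    (hφ : ∀ᶠ t in 𝓝 (0:ℝ), DifferentiableAt ℝ φ t)
    (hψ : HasDerivAt (deriv φ) c 0)
    (hmax : IsLocalMax φ 0) : c ≤ 0 := by
  by_contra hc
  push_neg at hc
  have h0 : deriv φ 0 = 0 := hmax.deriv_eq_zero
  have hslope := hasDerivAt_iff_tendsto_slope.1 hψ
  have h1 : ∀ᶠ t in 𝓝[≠] (0:ℝ), 0 < slope (deriv φ) 0 t :=
    hslope.eventually (eventually_gt_nhds hc)
  have hpos : ∀ᶠ t in 𝓝[>] (0:ℝ), 0 < deriv φ t := by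
    have h2 := h1.filter_mono (nhdsWithin_mono _ (fun t (ht : t ∈ Set.Ioi (0:ℝ)) =>
      ne_of_gt ht))
    filter_upwards [h2, self_mem_nhdsWithin] with t ht ht'
    have htpos : (0:ℝ) < t := ht'
    rw [slope_def_field, h0, sub_zero, sub_zero] at ht
    have := mul_pos ht htpos
    rwa [div_mul_cancel₀ _ (ne_of_gt htpos)] at this
  have hmax' : ∀ᶠ t in 𝓝 (0:ℝ), φ t ≤ φ 0 := hmax
  obtain ⟨e1, he1, hIoo⟩ := (nhdsGT_basis (0:ℝ)).eventually_iff.mp hpos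
  obtain ⟨e2, he2, hball⟩ := Metric.eventually_nhds_iff.mp (hφ.and hmax')
  set d := min e1 e2 / 2 with hd
  have hdpos : 0 < d := by positivity
  have hde1 : d < e1 := lt_of_lt_of_le (half_lt_self (lt_min he1 he2)) (min_le_left _ _)
  have hde2 : d < e2 := lt_of_lt_of_le (half_lt_self (lt_min he1 he2)) (min_le_right _ _)
  have hdiff : ∀ t ∈ Set.Icc (0:ℝ) d, DifferentiableAt ℝ φ t := by
    intro t ht
    refine (hball ?_).1
    rw [Real.dist_eq, sub_zero, abs_of_nonneg ht.1]
    exact lt_of_le_of_lt ht.2 hde2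
  have hmono : StrictMonoOn φ (Set.Icc 0 d) := by
    refine strictMonoOn_of_deriv_pos (convex_Icc _ _)
      (fun t ht => (hdiff t ht).continuousAt.continuousWithinAt) ?_
    intro t ht
    rw [interior_Icc] at ht
    exact hIoo ⟨ht.1, lt_trans ht.2 hde1⟩
  have h3 : φ 0 < φ d :=
    hmono (Set.left_mem_Icc.2 hdpos.le) (Set.right_mem_Icc.2 hdpos.le) hdpos
  have h4 : φ d ≤ φ 0 := by
    refine (hball ?_).2
    rw [Real.dist_eq, sub_zero, abs_of_nonneg hdpos.le]
    exact hde2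
  linarith

lemma dir2_nonpos {v : ℂ → ℝ} {z₀ : ℂ} (e : ℂ)
    (hdiff : ∀ᶠ w in 𝓝 z₀, DifferentiableAt ℝ v w)
    (h2 : DifferentiableAt ℝ (fun w => fderiv ℝ v w e) z₀)
    (hmax : IsLocalMax v z₀) :
    fderiv ℝ (fun w => fderiv ℝ v w e) z₀ e ≤ 0 := by
  set L : ℝ → ℂ := fun t => z₀ + t • e with hL
  have hLd : ∀ t : ℝ, HasDerivAt L e t := by
    intro t
    rw [hL]
    simpa using ((hasDerivAt_id t).smul_const e).const_add z₀
  have hLcont : Continuous L := by continuity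
  have hL0 : L 0 = z₀ := by simp [hL]
  set φ : ℝ → ℝ := fun t => v (L t) with hφdef
  have htend : Tendsto L (𝓝 0) (𝓝 z₀) := by
    rw [← hL0]; exact hLcont.continuousAt
  -- eventual differentiability of φ and formula for deriv φ
  have hev : ∀ᶠ t in 𝓝 (0:ℝ), DifferentiableAt ℝ v (L t) := htend.eventually hdiff
  have hder : ∀ᶠ t in 𝓝 (0:ℝ), deriv φ t = fderiv ℝ v (L t) e := by
    filter_upwards [hev] with t ht
    have : HasDerivAt φ (fderiv ℝ v (L t) e) t := by
      have := ht.hasFDerivAt.comp_hasDerivAt t (hLd t)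
      simpa [Function.comp_def] using this
    exact this.deriv
  have hφdiff : ∀ᶠ t in 𝓝 (0:ℝ), DifferentiableAt ℝ φ t := by
    filter_upwards [hev] with t ht
    exact (ht.hasFDerivAt.comp_hasDerivAt t (hLd t)).differentiableAt
  -- second derivative
  have hψ : HasDerivAt (fun t => fderiv ℝ v (L t) e)
      (fderiv ℝ (fun w => fderiv ℝ v w e) z₀ e) 0 := by
    rw [← hL0] at h2
    have := h2.hasFDerivAt.comp_hasDerivAt 0 (hLd 0)
    simpa [hL0, Function.comp_def] using this
  have hψ' : HasDerivAt (deriv φ) (fderiv ℝ (fun w => fderiv ℝ v w e) z₀ e) 0 :=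
    hψ.congr_of_eventuallyEq (by filter_upwards [hder] with t ht; exact ht)
  have hφmax : IsLocalMax φ 0 := by
    have h : IsMaxFilter v (𝓝 (L 0)) (L 0) := by rw [hL0]; exact hmax
    have := h.comp_tendsto (by rw [hL0] at *; exact htend)
    simp only [Function.comp_def] at this; exact this
  exact second_deriv_nonpos hφdiff hψ' hφmax

theorem stmt_3 (lam r : ℝ) (hlam : 1 < lam) (hr : 0 < r)
    (mu : ℝ) (hmu : mu = (lam ^ 3 - 1) / (4 * lam))
    (u : ℂ → ℝ)
    (hC2 : ContDiffOn ℝ 2 u (Metric.ball (0 : ℂ) r))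
    (hcont : ContinuousOn u (Metric.closedBall (0 : ℂ) r))
    (heq : ∀ z ∈ Metric.ball (0 : ℂ) r,
      laplacian u z = 4 * Real.exp (u z) - 4 * Real.exp (-2 * u z))
    (hbd : ∀ z ∈ Metric.closedBall (0 : ℂ) r,
      0 ≤ u z ∧ u z ≤ Real.log (mu * r ^ 2 + lam)) :
    u 0 ≤ Real.log lam := by
  have ha : (0:ℝ) < lam := by linarith
  have hmupos : 0 ≤ mu := by
    rw [hmu]
    apply div_nonneg _ (by linarith)
    nlinarith [sq_nonneg lam, sq_nonneg (lam - 1), sq_nonneg (lam + 1)]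
  have h4mu : 4 * lam * mu = lam ^ 3 - 1 := by
    rw [hmu]; field_simp
  have hUdiffAt : ∀ w, DifferentiableAt ℝ (UU lam mu) w :=
    fun w => (hasFDerivAt_UU ha hmupos w).differentiableAt
  have hUcont : Continuous (UU lam mu) := by
    have : Differentiable ℝ (UU lam mu) := fun w => hUdiffAt w
    exact this.continuous
  obtain ⟨z₀, hz₀mem, hz₀max⟩ :=
    (isCompact_closedBall (0:ℂ) r).exists_isMaxOn ⟨0, by simp [hr.le]⟩
      (hcont.sub hUcont.continuousOn)
  have hval : ∀ z : ℂ, gU lam mu z = lam + mu * ‖z‖ ^ 2 := by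
    intro z
    have : z.re ^ 2 + z.im ^ 2 = ‖z‖ ^ 2 := by
      rw [Complex.sq_norm, Complex.normSq_apply]; ring
    simp only [gU, this]
  have hglam : ∀ z : ℂ, lam ≤ gU lam mu z := by
    intro z
    have : 0 ≤ mu * (z.re ^ 2 + z.im ^ 2) := by positivity
    simp only [gU]; linarith
  have hkey : u z₀ - UU lam mu z₀ ≤ 0 := by
    by_cases hball : z₀ ∈ Metric.ball (0:ℂ) r
    · by_contra hpos
      push_neg at hpos
      set v : ℂ → ℝ := fun z => u z - UU lam mu z with hv
      have hloc : IsLocalMax v z₀ :=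
        hz₀max.isLocalMax (Filter.mem_of_superset (Metric.isOpen_ball.mem_nhds hball)
          Metric.ball_subset_closedBall)
      have hballnhds : Metric.ball (0:ℂ) r ∈ 𝓝 z₀ := Metric.isOpen_ball.mem_nhds hball
      have hudiff : ∀ᶠ w in 𝓝 z₀, DifferentiableAt ℝ u w := by
        filter_upwards [hballnhds] with w hw
        exact (hC2.differentiableOn (by norm_num)).differentiableAt
          (Metric.isOpen_ball.mem_nhds hw)
      have hvdiff : ∀ᶠ w in 𝓝 z₀, DifferentiableAt ℝ v w := by
        filter_upwards [hudiff] with w hw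
        exact hw.sub (hUdiffAt w)
      have hCA : ContDiffAt ℝ 2 u z₀ := hC2.contDiffAt hballnhds
      have hfd : ContDiffAt ℝ 1 (fderiv ℝ u) z₀ := hCA.fderiv_right (by norm_num)
      have hfd1 : ∀ e : ℂ, DifferentiableAt ℝ (fun w => fderiv ℝ u w e) z₀ := fun e =>
        (hfd.differentiableAt (by norm_num)).clm_apply (differentiableAt_const e)
      have hPdiff : DifferentiableAt ℝ (fun w => fderiv ℝ (UU lam mu) w 1) z₀ := by
        have h : (fun w => fderiv ℝ (UU lam mu) w 1) = fun w => 2*mu*w.re / gU lam mu w :=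
          funext (fderiv_UU_one ha hmupos)
        rw [h]; exact (hasFDerivAt_P ha hmupos z₀).differentiableAt
      have hQdiff : DifferentiableAt ℝ (fun w => fderiv ℝ (UU lam mu) w Complex.I) z₀ := by
        have h : (fun w => fderiv ℝ (UU lam mu) w Complex.I) =
            fun w => 2*mu*w.im / gU lam mu w := funext (fderiv_UU_I ha hmupos)
        rw [h]; exact (hasFDerivAt_Q ha hmupos z₀).differentiableAt
      have hsplit : ∀ e : ℂ, (fun w => fderiv ℝ v w e)
          =ᶠ[𝓝 z₀] (fun w => fderiv ℝ u w e - fderiv ℝ (UU lam mu) w e) := by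
        intro e
        filter_upwards [hudiff] with w hw
        rw [hv]
        rw [fderiv_fun_sub hw (hUdiffAt w)]
        simp
      have hd1 : DifferentiableAt ℝ (fun w => fderiv ℝ v w 1) z₀ :=
        ((hfd1 1).sub hPdiff).congr_of_eventuallyEq (hsplit 1)
      have hdI : DifferentiableAt ℝ (fun w => fderiv ℝ v w Complex.I) z₀ :=
        ((hfd1 Complex.I).sub hQdiff).congr_of_eventuallyEq (hsplit Complex.I)
      have key1 := dir2_nonpos 1 hvdiff hd1 hloc
      have keyI := dir2_nonpos Complex.I hvdiff hdI hloc
      have hlapv : fderiv ℝ (fun w => fderiv ℝ v w 1) z₀ 1 +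
          fderiv ℝ (fun w => fderiv ℝ v w Complex.I) z₀ Complex.I =
          laplacian u z₀ - laplacian (UU lam mu) z₀ := by
        rw [(hsplit 1).fderiv_eq, (hsplit Complex.I).fderiv_eq,
          fderiv_fun_sub (hfd1 1) hPdiff, fderiv_fun_sub (hfd1 Complex.I) hQdiff]
        simp only [laplacian, ContinuousLinearMap.sub_apply]
        ring
      have hlapU := laplacian_UU ha hmupos z₀
      have hlapu := heq z₀ hball
      have hg : 0 < gU lam mu z₀ := gU_pos ha hmupos z₀
      have hUval : Real.exp (UU lam mu z₀) = gU lam mu z₀ := Real.exp_log hg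
      have hUval2 : Real.exp (-2 * UU lam mu z₀) = ((gU lam mu z₀) ^ 2)⁻¹ := by
        rw [show -2 * UU lam mu z₀ = -(UU lam mu z₀ + UU lam mu z₀) by ring,
          Real.exp_neg, Real.exp_add, hUval, sq]
      have hu : UU lam mu z₀ < u z₀ := by
        have : (0:ℝ) < v z₀ := hpos
        rw [hv] at this; dsimp at this; linarith
      have hmono : 4 * Real.exp (UU lam mu z₀) - 4 * Real.exp (-2 * UU lam mu z₀) <
          4 * Real.exp (u z₀) - 4 * Real.exp (-2 * u z₀) := by
        have h1 : Real.exp (UU lam mu z₀) < Real.exp (u z₀) := Real.exp_lt_exp.2 hu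
        have h2 : Real.exp (-2 * u z₀) < Real.exp (-2 * UU lam mu z₀) :=
          Real.exp_lt_exp.2 (by linarith)
        linarith
      have hsup : 4 * lam * mu / gU lam mu z₀ ^ 2 ≤
          4 * gU lam mu z₀ - 4 * (gU lam mu z₀ ^ 2)⁻¹ := by
        rw [h4mu, div_le_iff₀ (by positivity)]
        have hgl := hglam z₀
        have h1 : lam ^ 3 ≤ gU lam mu z₀ ^ 3 := pow_le_pow_left₀ ha.le hgl 3
        have : (4 * gU lam mu z₀ - 4 * (gU lam mu z₀ ^ 2)⁻¹) * gU lam mu z₀ ^ 2 =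
            4 * gU lam mu z₀ ^ 3 - 4 := by
          field_simp
        rw [this]
        nlinarith
      have hle : laplacian u z₀ - laplacian (UU lam mu) z₀ ≤ 0 := by
        rw [← hlapv]; linarith
      rw [hlapu, hlapU] at hle
      rw [hUval, hUval2] at hmono
      linarith
    · have hd1 : dist z₀ (0:ℂ) ≤ r := Metric.mem_closedBall.1 hz₀mem
      have hd2 : ¬ dist z₀ (0:ℂ) < r := fun h => hball (Metric.mem_ball.2 h)
      have hnorm : ‖z₀‖ = r := by
        rw [← dist_zero_right z₀] at *
        linarith [not_lt.1 hd2]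
      have hUeq : UU lam mu z₀ = Real.log (mu * r ^ 2 + lam) := by
        rw [UU, hval, hnorm]
        ring_nf
      linarith [(hbd z₀ hz₀mem).2, hUeq.ge, hUeq.le]
  have h0mem : (0:ℂ) ∈ Metric.closedBall (0:ℂ) r := by simp [hr.le]
  have hmax0 : u 0 - UU lam mu 0 ≤ u z₀ - UU lam mu z₀ := hz₀max h0mem
  have hU0 : UU lam mu 0 = Real.log lam := by
    simp [UU, gU]
  linarith
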